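/- The action (a ⊗ a′ ⊗ b)·a₀ = a(b a₀)a′ makes A into a left module over the crossed product algebra X = A ⊗ A ⊗ H. -/

import Mathlib

open TensorProduct

noncomputable section ModuleAlgebraDeligne

universe u

variable (K A H : Type u)

/-- An `H`-module-algebra structure on `A`: an `H`-action by `K`-linear maps making `A`
an `H`-module, such that multiplication and unit of `A` are `H`-linear
(the Sweedler sum `∑ (b₍₁₎a₁)(b₍₂₎a₂)` is expressed via `Coalgebra.comul`). -/
structure ModAlg [Field K] [Ring A] [Algebra K A] [Ring H] [Bialgebra K H] where
  act : H →ₗ[K] A →ₗ[K] A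
  act_one : ∀ a : A, act 1 a = a
  act_mul : ∀ (b c : H) (a : A), act (b * c) a = act b (act c a)
  act_unit : ∀ b : H, act b (1 : A) = (Coalgebra.counit (R := K) b) • (1 : A)
  act_alg : ∀ (b : H) (a₁ a₂ : A),
    act b (a₁ * a₂) =
      LinearMap.mul' K A
        ((TensorProduct.homTensorHomMap (RingHom.id K) A A A A)
          (TensorProduct.map act act (Coalgebra.comul (R := K) b)) (a₁ ⊗ₜ[K] a₂))

variable [Field K] [Ring A] [Algebra K A] [Ring H] [Bialgebra K H]

/-- The defining formula of the crossed product multiplication on `X = A ⊗ A ⊗ H`: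
`(a₁ ⊗ a₁' ⊗ b¹)(a₂ ⊗ a₂' ⊗ b²) = ∑ a₁(b¹₍₁₎a₂) ⊗ (b¹₍₃₎a₂')a₁' ⊗ b¹₍₂₎b²`. -/
def XMulFormula (act : H →ₗ[K] A →ₗ[K] A)
    (mul : (A ⊗[K] (A ⊗[K] H)) →ₗ[K] (A ⊗[K] (A ⊗[K] H)) →ₗ[K] (A ⊗[K] (A ⊗[K] H))) :
    Prop :=
  ∀ (a₁ a₁' : A) (b₁ : H) (a₂ a₂' : A) (b₂ : H),
    mul (a₁ ⊗ₜ[K] (a₁' ⊗ₜ[K] b₁)) (a₂ ⊗ₜ[K] (a₂' ⊗ₜ[K] b₂)) =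
      TensorProduct.map
        (LinearMap.mulLeft K a₁ ∘ₗ act.flip a₂)
        ((TensorProduct.map (LinearMap.mulRight K a₁' ∘ₗ act.flip a₂')
            (LinearMap.mulRight K b₂)) ∘ₗ (TensorProduct.comm K H H).toLinearMap)
        ((LinearMap.lTensor H (Coalgebra.comul (R := K)) ∘ₗ Coalgebra.comul (R := K)) b₁)

/-- Iterated tensor power `A^{⊗(n+1)}` (so `Tpow K A n` has `n+1` tensor factors),
bundled with its module structure. -/
def TpowAux : ℕ → Σ' (T : Type u) (_ : AddCommGroup T), Module K T
  | 0 => ⟨A, inferInstance, inferInstance⟩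
  | n + 1 =>
    letI T := TpowAux n
    letI : AddCommGroup T.1 := T.2.1
    letI : Module K T.1 := T.2.2
    ⟨A ⊗[K] T.1, inferInstance, inferInstance⟩

/-- `Tpow K A n = A^{⊗(n+1)}`. -/
def Tpow (n : ℕ) : Type u := (TpowAux K A n).1

instance instTpowAuxACG (n : ℕ) : AddCommGroup (TpowAux K A n).1 := (TpowAux K A n).2.1
instance instTpowAuxMod (n : ℕ) : Module K (TpowAux K A n).1 := (TpowAux K A n).2.2
instance (n : ℕ) : AddCommGroup (Tpow K A n) := (TpowAux K A n).2.1
instance (n : ℕ) : Module K (Tpow K A n) := (TpowAux K A n).2.2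

/-- Cast between equal tensor powers (identity when `m = n`, junk `0` otherwise). -/
def tmap (m n : ℕ) : Tpow K A m →ₗ[K] Tpow K A n :=
  if h : m = n then by subst h; exact LinearMap.id else 0

/-- Left multiplication by an element of `A` on the first tensor factor. -/
def lmulL : ∀ n : ℕ, A →ₗ[K] Tpow K A n →ₗ[K] Tpow K A n
  | 0 => LinearMap.mul K A
  | n + 1 =>
    (LinearMap.rTensorHom (R := K) (M := Tpow K A n) (N := A) (P := A)) ∘ₗ
      LinearMap.mul K A

/-- Right multiplication by an element of `A` on the last tensor factor. -/
def rmulL : ∀ n : ℕ, A →ₗ[K] Tpow K A n →ₗ[K] Tpow K A n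
  | 0 => (LinearMap.mul K A).flip
  | n + 1 =>
    (LinearMap.lTensorHom (R := K) (M := A) (N := Tpow K A n) (P := Tpow K A n)) ∘ₗ
      rmulL n

/-- Componentwise action of `H^{⊗(n+1)}` on `A^{⊗(n+1)}` induced by an action of `H` on `A`. -/
def tact (act : H →ₗ[K] A →ₗ[K] A) :
    ∀ n : ℕ, Tpow K H n →ₗ[K] Tpow K A n →ₗ[K] Tpow K A n
  | 0 => act
  | n + 1 =>
    (TensorProduct.homTensorHomMap (RingHom.id K) A (Tpow K A n) A (Tpow K A n)) ∘ₗ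
      TensorProduct.map act (tact act n)

/-- Iterated comultiplication `Δⁿ : H → H^{⊗(n+1)}`. -/
def itComul : ∀ n : ℕ, H →ₗ[K] Tpow K H n
  | 0 => LinearMap.id
  | n + 1 => LinearMap.lTensor H (itComul n) ∘ₗ Coalgebra.comul (R := K)

/-- The action of the pure tensor `a ⊗ a' ⊗ b ∈ X = A ⊗ A ⊗ H` on `A^{⊗(n+1)}`:
`(a ⊗ a' ⊗ b)(a₀ ⊗ ⋯ ⊗ aₙ) = ∑ a b₍₁₎a₀ ⊗ b₍₂₎a₁ ⊗ ⋯ ⊗ b₍ₙ₊₁₎aₙ a'`. -/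
def xActP (act : H →ₗ[K] A →ₗ[K] A) (n : ℕ) (a a' : A) (b : H) :
    Tpow K A n →ₗ[K] Tpow K A n :=
  lmulL K A n a ∘ₗ rmulL K A n a' ∘ₗ tact K A H act n (itComul K H n b)

/-- `X`-linearity (equivariance with respect to all pure tensors of `X = A ⊗ A ⊗ H`)
of a degree-`m` Hopf-Hochschild cochain `g : A^{⊗(m+2)} → A`. -/
def IsXLinear (act : H →ₗ[K] A →ₗ[K] A) (m : ℕ) (g : Tpow K A (m + 1) →ₗ[K] A) : Prop :=
  ∀ (a a' : A) (b : H) (t : Tpow K A (m + 1)),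
    g (xActP K A H act (m + 1) a a' b t) = a * act b (g t) * a'

/-- Append an element of `A` as a new last tensor factor. -/
def appendA : ∀ n : ℕ, A →ₗ[K] Tpow K A n →ₗ[K] Tpow K A (n + 1)
  | 0 => (TensorProduct.mk K A A).flip
  | n + 1 =>
    (LinearMap.lTensorHom (R := K) (M := A) (N := Tpow K A n) (P := Tpow K A (n + 1))) ∘ₗ
      appendA n

/-- The "inner part" `g(1 ⊗ - ⊗ 1) : A^{⊗n} → A` of a cochain `g : A^{⊗(n+2)} → A`. -/
def innerC {n : ℕ} (g : Tpow K A (n + 2) →ₗ[K] A) : Tpow K A n →ₗ[K] A :=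
  g ∘ₗ TensorProduct.mk K A (Tpow K A (n + 1)) 1 ∘ₗ appendA K A n 1

/-- Consume the first `n+1` tensor factors of `A^{⊗(S+n+2)}` using a map `A^{⊗(n+1)} → A`,
leaving the remaining `A^{⊗(S+1)}`. -/
def consume : ∀ n S : ℕ,
    (Tpow K A n →ₗ[K] A) →ₗ[K] (Tpow K A (S + n + 1) →ₗ[K] A ⊗[K] Tpow K A S)
  | 0, S => LinearMap.rTensorHom (R := K) (M := Tpow K A S) (N := A) (P := A)
  | n + 1, S =>
    (TensorProduct.lift.equiv (RingHom.id K) A (Tpow K A (S + n + 1)) (A ⊗[K] Tpow K A S)).toLinearMap ∘ₗ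
      (LinearMap.llcomp K A (Tpow K A n →ₗ[K] A)
          (Tpow K A (S + n + 1) →ₗ[K] A ⊗[K] Tpow K A S) (consume n S)) ∘ₗ
        TensorProduct.lcurry (RingHom.id K) A (Tpow K A n) A

/-- An operadic "entry": a Hopf-Hochschild cochain of degree `m`,
i.e. a linear map `A^{⊗(m+2)} → A`. -/
def Entry : Type u := Σ' m : ℕ, Tpow K A (m + 1) →ₗ[K] A

/-- Total degree of a list of entries. -/
def sumA : List (Entry K A) → ℕ
  | [] => 0
  | e :: l => sumA l + e.1

/-- The block-substitution map underlying the operad structure maps `γ`. -/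
def gammaAux : ∀ l : List (Entry K A), Tpow K A (sumA K A l) →ₗ[K] Tpow K A l.length
  | [] => LinearMap.id
  | ⟨0, _⟩ :: _ => 0
  | ⟨n + 1, g⟩ :: l =>
    LinearMap.lTensor A (gammaAux l) ∘ₗ consume K A n (sumA K A l) (innerC K A g)

/-- The operad structure map `γ(f; g₁, …, g_k)` of the Hopf-Hochschild cochain operad. -/
def gamma (l : List (Entry K A)) (f : Tpow K A (l.length + 1) →ₗ[K] A) :
    Tpow K A (sumA K A l + 1) →ₗ[K] A :=
  f ∘ₗ LinearMap.lTensor A (gammaAux K A l)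

/-- `γ(f; g₁, …, g_k)` with degree bookkeeping by casts: `f` has degree `k`,
the result is regarded as a map on `Tpow K A M = A^{⊗(M+1)}`
(the casts are identities in every intended use, where `l.length = k`
and `M = sumA l + 1`). -/
def gammaD (k : ℕ) (f : Tpow K A (k + 1) →ₗ[K] A) (l : List (Entry K A)) (M : ℕ) :
    Tpow K A M →ₗ[K] A :=
  gamma K A l (f ∘ₗ tmap K A (l.length + 1) (k + 1)) ∘ₗ tmap K A M (sumA K A l + 1)

/-- The identity cochain `Id ∈ C(1)`, `a₀ ⊗ a₁ ⊗ a₂ ↦ a₀a₁a₂`. -/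
def idC : Tpow K A 2 →ₗ[K] A :=
  LinearMap.mul' K A ∘ₗ LinearMap.lTensor A (LinearMap.mul' K A)

/-- `Id` as an entry. -/
def idE : Entry K A := ⟨1, idC K A⟩

/-- The multiplication cochain `π ∈ C(2)`, `a₀ ⊗ a₁ ⊗ a₂ ⊗ a₃ ↦ a₀a₁a₂a₃`. -/
def piC : Tpow K A 3 →ₗ[K] A :=
  LinearMap.mul' K A ∘ₗ
    LinearMap.lTensor A (LinearMap.mul' K A ∘ₗ LinearMap.lTensor A (LinearMap.mul' K A))

/-- The face map `∂ⱼ : A^{⊗(n+2)} → A^{⊗(n+1)}` of the bar complex. -/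
def face : ∀ n j : ℕ, Tpow K A (n + 1) →ₗ[K] Tpow K A n
  | n, 0 => TensorProduct.lift (lmulL K A n)
  | 0, _ + 1 => TensorProduct.lift (lmulL K A 0)
  | n + 1, j + 1 => LinearMap.lTensor A (face n j)

/-- The bar differential `d_n = ∑_{j=0}^n (−1)ʲ ∂ⱼ : A^{⊗(n+2)} → A^{⊗(n+1)}`. -/
def barDiff (n : ℕ) : Tpow K A (n + 1) →ₗ[K] Tpow K A n :=
  ∑ j ∈ Finset.range (n + 1), (-1 : K) ^ j • face K A n j

end ModuleAlgebraDeligne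

/-- The action `(a ⊗ a′ ⊗ b)·a₀ = a(b a₀)a′` makes `A` into a left module
over the crossed product algebra `X = A ⊗ A ⊗ H`. -/
theorem crossed_product_module_on_A
    {K A H : Type u} [Field K] [Ring A] [Algebra K A] [Ring H] [Bialgebra K H]
    (M : ModAlg K A H)
    (mul : (A ⊗[K] (A ⊗[K] H)) →ₗ[K] (A ⊗[K] (A ⊗[K] H)) →ₗ[K] (A ⊗[K] (A ⊗[K] H)))
    (hmul : XMulFormula K A H M.act mul)
    (ρ : (A ⊗[K] (A ⊗[K] H)) →ₗ[K] A →ₗ[K] A)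
    (hρ : ∀ (a a' : A) (b : H) (a₀ : A),
      ρ (a ⊗ₜ[K] (a' ⊗ₜ[K] b)) a₀ = a * M.act b a₀ * a') :
    ρ ((1 : A) ⊗ₜ[K] ((1 : A) ⊗ₜ[K] (1 : H))) = LinearMap.id ∧
    ∀ x y : A ⊗[K] (A ⊗[K] H), ρ (mul x y) = ρ x ∘ₗ ρ y := by
  
  constructor
  · ext a₀
    simp [hρ, M.act_one]
  · -- Key lemma on pure tensors
    have hGa : ∀ (x y : A) (b : H), M.act b (x * y) =
        (LinearMap.mul' K A ∘ₗ
          TensorProduct.map (M.act.flip x) (M.act.flip y)) (Coalgebra.comul (R := K) b) := by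
      intro x y b
      rw [M.act_alg]
      generalize Coalgebra.comul (R := K) b = w
      induction w using TensorProduct.induction_on with
      | zero => simp
      | tmul u v => simp
      | add w₁ w₂ h₁ h₂ => simp_all [map_add]
    have key : ∀ (a₁ a₁' : A) (b₁ : H) (a₂ a₂' : A) (b₂ : H),
        ρ (mul (a₁ ⊗ₜ[K] (a₁' ⊗ₜ[K] b₁)) (a₂ ⊗ₜ[K] (a₂' ⊗ₜ[K] b₂))) =
          ρ (a₁ ⊗ₜ[K] (a₁' ⊗ₜ[K] b₁)) ∘ₗ ρ (a₂ ⊗ₜ[K] (a₂' ⊗ₜ[K] b₂)) := by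
      intro a₁ a₁' b₁ a₂ a₂' b₂
      ext a₀
      set f : H →ₗ[K] A := LinearMap.mulLeft K a₁ ∘ₗ M.act.flip a₂ with hf
      set g : H ⊗[K] H →ₗ[K] A ⊗[K] H :=
        (TensorProduct.map (LinearMap.mulRight K a₁' ∘ₗ M.act.flip a₂')
          (LinearMap.mulRight K b₂)) ∘ₗ (TensorProduct.comm K H H).toLinearMap with hg
      set G' : H ⊗[K] H →ₗ[K] A :=
        LinearMap.mul' K A ∘ₗ
          TensorProduct.map (M.act.flip (M.act b₂ a₀)) (M.act.flip a₂') with hG'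
      set Phi : H ⊗[K] (H ⊗[K] H) →ₗ[K] A :=
        LinearMap.mul' K A ∘ₗ TensorProduct.map (M.act.flip a₂) G' with hPhi
      have h1 : (ρ ∘ₗ TensorProduct.map f g).flip a₀ =
          (LinearMap.mulRight K a₁') ∘ₗ (LinearMap.mulLeft K a₁) ∘ₗ Phi := by
        ext u p q
        simp only [LinearMap.coe_comp, Function.comp_apply, AlgebraTensorModule.curry_apply,
          TensorProduct.curry_apply, LinearMap.coe_restrictScalars, LinearMap.flip_apply,
          TensorProduct.map_tmul, hf, hg, hG', hPhi, TensorProduct.comm_tmul,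
          LinearMap.mulLeft_apply, LinearMap.mulRight_apply, LinearMap.mul'_apply, hρ, LinearEquiv.coe_coe]
        rw [M.act_mul]
        noncomm_ring
      have h2 : Phi ((LinearMap.lTensor H (Coalgebra.comul (R := K)) ∘ₗ
            Coalgebra.comul (R := K)) b₁) =
          M.act b₁ (a₂ * (M.act b₂ a₀ * a₂')) := by
        have hay : M.act.flip (M.act b₂ a₀ * a₂') = G' ∘ₗ Coalgebra.comul (R := K) := by
          ext v
          simpa [hG'] using hGa (M.act b₂ a₀) a₂' v
        have hmapc : TensorProduct.map (M.act.flip a₂) (G' ∘ₗ Coalgebra.comul (R := K)) =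
            TensorProduct.map (M.act.flip a₂) G' ∘ₗ
              LinearMap.lTensor H (Coalgebra.comul (R := K)) := by
          rw [LinearMap.lTensor, ← TensorProduct.map_comp, LinearMap.comp_id]
        conv_rhs => rw [hGa a₂ (M.act b₂ a₀ * a₂') b₁, hay, hmapc]
        simp only [hPhi, LinearMap.comp_apply]
      have := DFunLike.congr_fun h1
        ((LinearMap.lTensor H (Coalgebra.comul (R := K)) ∘ₗ Coalgebra.comul (R := K)) b₁)
      simp only [LinearMap.flip_apply, LinearMap.coe_comp, Function.comp_apply] at this
      rw [LinearMap.comp_apply, hρ, hρ, hmul a₁ a₁' b₁ a₂ a₂' b₂]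
      simp only [LinearMap.comp_apply] at h2 this ⊢
      rw [this, h2]
      simp only [LinearMap.mulRight_apply, LinearMap.mulLeft_apply]
      noncomm_ring
    intro x y
    induction x using TensorProduct.induction_on with
    | zero => simp
    | add x₁ x₂ h₁ h₂ => simp_all [map_add, LinearMap.add_apply]; rw [LinearMap.add_comp]
    | tmul a₁ s₁ =>
      induction s₁ using TensorProduct.induction_on with
      | zero => simp
      | add s₁ s₂ h₁ h₂ =>
        simp_all [TensorProduct.tmul_add, map_add, LinearMap.add_apply]
        rw [LinearMap.add_comp]
      | tmul a₁' b₁ =>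
        induction y using TensorProduct.induction_on with
        | zero => simp
        | add y₁ y₂ h₁ h₂ => simp_all [map_add, LinearMap.add_apply]; rw [LinearMap.comp_add]
        | tmul a₂ s₂ =>
          induction s₂ using TensorProduct.induction_on with
          | zero => simp
          | add s₁ s₂ h₁ h₂ =>
            simp_all [TensorProduct.tmul_add, map_add, LinearMap.add_apply]
            rw [LinearMap.comp_add]
          | tmul a₂' b₂ => exact key a₁ a₁' b₁ a₂ a₂' b₂
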